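/- Suppose the sequences are generated by Algorithm II. Then there exists a constant C > 0 (depending only on p, σ, θ and E_0) such that for every integer k ≥ 1: Φ(x_k) − Φ(x*) ≤ C·k^{−(3p+1)/2}, inf_{1 ≤ i ≤ k} ‖w_i‖² ≤ C·k^{−3p}, and inf_{1 ≤ i ≤ k} ε_i ≤ C·k^{−(3p+3)/2}. -/

import Mathlib

open scoped RealInnerProductSpace

lemma alg2_scalar (σ a g g1 l e P0 P1 I1 I2 J1 J2 W R V2 : ℝ)
    (hg : 0 < g) (ha0 : 0 < a) (ha1 : a < 1) (hl : 0 < l)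
    (hg1 : g1 = (1-a)*g) (haeq : a^2 = l*g1)
    (f1 : P1 - P0 ≤ J1 + e) (f2 : P1 ≤ J2 + e)
    (f3 : (1-a)*J1 + a*J2 = I1 + a*I2)
    (f5 : l^2*W^2 + 2*l*I1 + R^2 + 2*l*e ≤ σ^2*R^2) :
    1/g1*P1 + (1/2)*(V2 - 2*(a/g1)*I2 + (a/g1)^2*W^2) + ((1-σ^2)/2)*((1/g1)/l)*R^2
      ≤ 1/g*P0 + (1/2)*V2 := by
  have h1a : (0:ℝ) < 1 - a := by linarith
  have hg1pos : 0 < g1 := by rw [hg1]; positivity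
  set X := 1/g1 with hXdef
  set L := 1/l with hLdef
  have hX : g1 * X = 1 := by rw [hXdef]; field_simp
  have hlL : l * L = 1 := by rw [hLdef]; field_simp
  have hXpos : 0 < X := by positivity
  have hLpos : 0 < L := by positivity
  have step1 : P1 - (1-a)*P0 ≤ I1 + a*I2 + e := by
    have e1 := mul_le_mul_of_nonneg_left f1 h1a.le
    have e2 := mul_le_mul_of_nonneg_left f2 ha0.le
    nlinarith [e1, e2, f3]
  have h1 : X*(P1 - (1-a)*P0) ≤ X*(I1 + a*I2 + e) :=
    mul_le_mul_of_nonneg_left step1 hXpos.le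
  have h3 : 2*l*(I1+e) ≤ (σ^2-1)*R^2 - l^2*W^2 := by linarith
  have h4 : (X*L/2)*(2*l*(I1+e)) ≤ (X*L/2)*((σ^2-1)*R^2 - l^2*W^2) :=
    mul_le_mul_of_nonneg_left h3 (by positivity)
  have lhs_eq : (X*L/2)*(2*l*(I1+e)) = X*(I1+e) := by
    linear_combination (X*(I1+e))*hlL
  have h4' : X*(I1+e) ≤ (X*L/2)*((σ^2-1)*R^2 - l^2*W^2) := lhs_eq ▸ h4
  have key2X : a^2*X^2 = l*X := by
    have : g1 ≠ 0 := ne_of_gt hg1pos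
    have hX' : X = g1⁻¹ := by rw [hXdef, one_div]
    rw [hX', haeq]; field_simp
  have id1 : (X*L/2)*(l^2*W^2) = (l*X/2)*W^2 := by linear_combination (l*X*W^2/2)*hlL
  have id2 : a^2*X^2*W^2 = l*X*W^2 := by linear_combination W^2*key2X
  have hP0eq : 1/g*P0 = X*((1-a)*P0) := by
    rw [hXdef, hg1]; field_simp
  have goal' : X*P1 + (1/2)*(V2 - 2*(a*X)*I2 + (a*X)^2*W^2) + ((1-σ^2)/2)*(X*L)*R^2
      ≤ X*((1-a)*P0) + (1/2)*V2 := by nlinarith [h1, h4', id1, id2]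
  have e1 : a/g1 = a*X := by rw [hXdef]; ring
  have e2 : (1:ℝ)/g1/l = X*L := by rw [hXdef, hLdef]; ring
  calc 1/g1*P1 + (1/2)*(V2 - 2*(a/g1)*I2 + (a/g1)^2*W^2) + ((1-σ^2)/2)*((1/g1)/l)*R^2
      = X*P1 + (1/2)*(V2 - 2*(a*X)*I2 + (a*X)^2*W^2) + ((1-σ^2)/2)*(X*L)*R^2 := by
        rw [e1, e2]
    _ ≤ X*((1-a)*P0) + (1/2)*V2 := goal'
    _ = 1/g*P0 + (1/2)*V2 := by rw [hP0eq]

open Finset in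
lemma alg2_sumpow (t : ℝ) (ht : 0 ≤ t) (k : ℕ) (hk : 2 ≤ k) :
    (2:ℝ)^(-(t+2)) * (k:ℝ)^(t+1) ≤ ∑ j ∈ Finset.Ico 1 k, (j:ℝ)^t := by
  have hm : k/2 ≥ 1 := Nat.one_le_div_iff (by norm_num) |>.2 hk
  have hsub : Finset.Ico (k - k/2) k ⊆ Finset.Ico 1 k := by
    apply Finset.Ico_subset_Ico _ le_rfl
    omega
  have hterm : ∀ j ∈ Finset.Ico (k - k/2) k, ((k:ℝ)/2)^t ≤ (j:ℝ)^t := by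
    intro j hj
    rw [Finset.mem_Ico] at hj
    apply Real.rpow_le_rpow (by positivity) _ ht
    have h1 : (k:ℝ) ≤ 2 * (k - k/2 : ℕ) := by
      have : k ≤ 2 * (k - k/2) := by omega
      exact_mod_cast this
    have h2 : ((k - k/2 : ℕ):ℝ) ≤ j := by exact_mod_cast hj.1
    linarith
  have hcard : (Finset.Ico (k - k/2) k).card = k/2 := by
    rw [Nat.card_Ico]; omega
  have hsum1 : ((k/2 : ℕ):ℝ) * ((k:ℝ)/2)^t ≤ ∑ j ∈ Finset.Ico (k - k/2) k, (j:ℝ)^t := by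
    calc ((k/2 : ℕ):ℝ) * ((k:ℝ)/2)^t = (Finset.Ico (k - k/2) k).card * ((k:ℝ)/2)^t := by
          rw [hcard]
      _ ≤ ∑ j ∈ Finset.Ico (k - k/2) k, (j:ℝ)^t := by
          have := Finset.card_nsmul_le_sum _ _ _ hterm
          rwa [nsmul_eq_mul] at this
  have hsum2 : ∑ j ∈ Finset.Ico (k - k/2) k, (j:ℝ)^t ≤ ∑ j ∈ Finset.Ico 1 k, (j:ℝ)^t :=
    Finset.sum_le_sum_of_subset_of_nonneg hsub (fun j _ _ => by positivity)
  have hq : (k:ℝ)/4 ≤ ((k/2:ℕ):ℝ) := by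
    have : k ≤ 4 * (k/2) := by omega
    have := (Nat.cast_le (α := ℝ)).2 this
    push_cast at this
    linarith
  have hfin : (2:ℝ)^(-(t+2)) * (k:ℝ)^(t+1) ≤ (k:ℝ)/4 * ((k:ℝ)/2)^t := by
    have hk0 : (0:ℝ) < k := by positivity
    rw [Real.div_rpow (by positivity) (by norm_num), Real.rpow_neg (by norm_num),
      Real.rpow_add hk0, Real.rpow_add (by norm_num : (0:ℝ) < 2), Real.rpow_one]
    have h2t : (0:ℝ) < 2^t := Real.rpow_pos_of_pos (by norm_num) t
    apply le_of_eq
    field_simp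
    ring
  have : (k:ℝ)/4 * ((k:ℝ)/2)^t ≤ ((k/2:ℕ):ℝ) * ((k:ℝ)/2)^t :=
    mul_le_mul_of_nonneg_right hq (by positivity)
  linarith

open Finset Real in
lemma alg2_bootstrap (p : ℕ) (hp : 2 ≤ p) (lam B : ℕ → ℝ) (K Λ : ℝ)
    (hK : 0 < K) (hΛ : 0 < Λ)
    (hlampos : ∀ i : ℕ, 0 < lam (i+1)) (hlam : ∀ i : ℕ, Λ ≤ lam (i+1))
    (hB : ∀ k : ℕ, B k = ∑ i ∈ Finset.range k, Real.sqrt (lam (i+1)))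
    (hcon : ∀ k : ℕ, ∑ i ∈ Finset.range k,
      (B (i+1))^2 * (lam (i+1)) ^ (-(((p:ℝ)+1)/((p:ℝ)-1))) ≤ K) :
    ∃ c > 0, ∀ k : ℕ, 1 ≤ k → c * (k:ℝ) ^ ((3*(p:ℝ)+1)/4) ≤ B k := by
  set P := (p:ℝ) with hPdef
  have hP : 2 ≤ P := by rw [hPdef]; exact_mod_cast hp
  set s := (P-1)/(3*P+1) with hs
  set β := (P+1)/(P-1) with hβ
  set t := (P-1)/2 with ht
  set q := (3*P+1)/4 with hq
  have hP1 : (0:ℝ) < P - 1 := by linarith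
  have h3P : (0:ℝ) < 3*P+1 := by linarith
  have hs0 : 0 < s := div_pos hP1 h3P
  have hs13 : 3*s < 1 := by
    rw [hs, ← mul_div_assoc]; exact (div_lt_one h3P).2 (by linarith)
  have hs1 : s < 1 := by linarith
  have htnn : 0 ≤ t := by rw [ht]; linarith
  have hβs : β * s = (1-s)/2 := by rw [hβ, hs]; field_simp; ring
  have hqs : q*(2*s) = t := by rw [hq, hs, ht]; field_simp; ring
  have hq1s : q*(1-s) = t+1 := by rw [hq, hs]; field_simp; ring
  have hq3s : q*(1-3*s) = 1 := by rw [hq, hs]; field_simp; ring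
  set M := K ^ s with hM
  have hMpos : 0 < M := Real.rpow_pos_of_pos hK s
  have hNpos : (0:ℝ) < 2^(-(t+2))/M := by positivity
  set c := min (Real.sqrt Λ) ((2^(-(t+2))/M) ^ q) with hc
  have hcpos : 0 < c := lt_min (Real.sqrt_pos.2 hΛ) (Real.rpow_pos_of_pos hNpos q)
  have hBnn : ∀ m : ℕ, 0 ≤ B m := fun m => by
    rw [hB]; exact Finset.sum_nonneg fun i _ => Real.sqrt_nonneg _
  refine ⟨c, hcpos, ?_⟩
  intro k
  induction k using Nat.strong_induction_on with
  | _ k ih =>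
  intro hk1
  rcases eq_or_lt_of_le hk1 with h1 | h2
  · rw [← h1]
    have hB1 : B 1 = Real.sqrt (lam 1) := by rw [hB]; simp
    have h2' : Real.sqrt Λ ≤ B 1 := by
      rw [hB1]; exact Real.sqrt_le_sqrt (hlam 0)
    have hc1 : c ≤ Real.sqrt Λ := min_le_left _ _
    push_cast
    rw [Real.one_rpow]
    linarith
  · have hk2 : 2 ≤ k := h2
    have hkpos : (0:ℝ) < k := by positivity
    have hBkpos : 0 < B k := by
      have hB1 : Real.sqrt Λ ≤ B 1 := by
        rw [hB]; simpa using Real.sqrt_le_sqrt (hlam 0)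
      have hmono : B 1 ≤ B k := by
        rw [hB, hB]
        exact Finset.sum_le_sum_of_subset_of_nonneg
          (Finset.range_subset_range.2 hk1) (fun i _ _ => Real.sqrt_nonneg _)
      have := Real.sqrt_pos.2 hΛ
      linarith
    set τ := K / B k with hτ
    have hτpos : 0 < τ := div_pos hK hBkpos
    have hτs : 0 < τ^s := Real.rpow_pos_of_pos hτpos s
    have hpt : ∀ i : ℕ, (B (i+1)) ^ (2*s) ≤
        s*(τ^s/τ)*((B (i+1))^2 * (lam (i+1)) ^ (-β)) + (1-s)*τ^s*Real.sqrt (lam (i+1)) := by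
      intro i
      have hlp := hlampos i
      set X := (B (i+1))^2 * (lam (i+1)) ^ (-β) with hX
      set Y := Real.sqrt (lam (i+1)) with hY
      have hXnn : 0 ≤ X := mul_nonneg (pow_nonneg (hBnn _) 2) (Real.rpow_nonneg hlp.le _)
      have hYnn : 0 ≤ Y := Real.sqrt_nonneg _
      have hgm := Real.geom_mean_le_arith_mean2_weighted hs0.le (by linarith : (0:ℝ) ≤ 1-s)
        (div_nonneg hXnn hτpos.le) hYnn (by ring)
      have hmul := mul_le_mul_of_nonneg_left hgm hτs.le
      have hlhs : τ^s * ((X/τ)^s * Y^(1-s)) = X^s * Y^(1-s) := by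
        rw [Real.div_rpow hXnn hτpos.le]
        field_simp
      have e1 : X^s = (B (i+1))^(2*s) * (lam (i+1))^(-(β*s)) := by
        rw [hX, Real.mul_rpow (pow_nonneg (hBnn _) 2) (Real.rpow_nonneg hlp.le _),
          ← Real.rpow_natCast (B (i+1)) 2, ← Real.rpow_mul (hBnn _),
          ← Real.rpow_mul hlp.le]
        norm_num
      have e2 : Y^(1-s) = (lam (i+1))^((1-s)/2) := by
        rw [hY, Real.sqrt_eq_rpow, ← Real.rpow_mul hlp.le]
        congr 1; ring
      have e3 : X^s * Y^(1-s) = (B (i+1))^(2*s) := by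
        rw [e1, e2, mul_assoc, ← Real.rpow_add hlp]
        have : -(β*s) + (1-s)/2 = 0 := by linarith
        rw [this, Real.rpow_zero, mul_one]
      calc (B (i+1))^(2*s) = τ^s * ((X/τ)^s * Y^(1-s)) := by rw [hlhs, e3]
        _ ≤ τ^s * (s * (X/τ) + (1-s) * Y) := hmul
        _ = s*(τ^s/τ)*X + (1-s)*τ^s*Y := by ring
    -- sum the pointwise bound
    have hsumX := hcon k
    have hsumY : ∑ i ∈ Finset.range k, Real.sqrt (lam (i+1)) = B k := (hB k).symm
    have hH : ∑ i ∈ Finset.range k, (B (i+1)) ^ (2*s) ≤ M * (B k)^(1-s) := by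
      have h1 : ∑ i ∈ Finset.range k, (B (i+1)) ^ (2*s) ≤
          s*(τ^s/τ)*K + (1-s)*τ^s*(B k) := by
        calc ∑ i ∈ Finset.range k, (B (i+1)) ^ (2*s)
            ≤ ∑ i ∈ Finset.range k, (s*(τ^s/τ)*((B (i+1))^2 * (lam (i+1)) ^ (-β))
                + (1-s)*τ^s*Real.sqrt (lam (i+1))) := Finset.sum_le_sum fun i _ => hpt i
          _ = s*(τ^s/τ)*(∑ i ∈ Finset.range k, (B (i+1))^2 * (lam (i+1)) ^ (-β))
                + (1-s)*τ^s*(∑ i ∈ Finset.range k, Real.sqrt (lam (i+1))) := by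
              rw [Finset.sum_add_distrib, ← Finset.mul_sum, ← Finset.mul_sum]
          _ ≤ s*(τ^s/τ)*K + (1-s)*τ^s*(B k) := by
              rw [hsumY]
              have hco : 0 ≤ s*(τ^s/τ) := by positivity
              have := mul_le_mul_of_nonneg_left hsumX hco
              linarith
      have h2' : s*(τ^s/τ)*K + (1-s)*τ^s*(B k) = τ^s * B k := by
        rw [hτ]; field_simp; ring
      have h3 : τ^s * B k = M * (B k)^(1-s) := by
        rw [hτ, Real.div_rpow hK.le hBkpos.le, hM]
        rw [Real.rpow_sub hBkpos, Real.rpow_one]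
        field_simp
      linarith [h1, h2'.symm.le, h3.le]
    -- lower bound the sum using the induction hypothesis
    have hLow : c^(2*s) * ((2:ℝ)^(-(t+2)) * (k:ℝ)^(t+1)) ≤
        ∑ i ∈ Finset.range k, (B (i+1)) ^ (2*s) := by
      have hsub : ∑ i ∈ Finset.range (k-1), (B (i+1)) ^ (2*s) ≤
          ∑ i ∈ Finset.range k, (B (i+1)) ^ (2*s) :=
        Finset.sum_le_sum_of_subset_of_nonneg
          (Finset.range_subset_range.2 (by omega))
          (fun i _ _ => Real.rpow_nonneg (hBnn _) _)
      have hterm : ∀ i ∈ Finset.range (k-1),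
          c^(2*s) * ((i+1:ℕ):ℝ)^t ≤ (B (i+1)) ^ (2*s) := by
        intro i hi
        rw [Finset.mem_range] at hi
        have hih := ih (i+1) (by omega) (by omega)
        have hbase : 0 ≤ c * ((i+1:ℕ):ℝ)^q := by positivity
        have := Real.rpow_le_rpow hbase hih (by positivity : (0:ℝ) ≤ 2*s)
        rwa [Real.mul_rpow hcpos.le (Real.rpow_nonneg (by positivity) q),
          ← Real.rpow_mul (by positivity : (0:ℝ) ≤ ((i+1:ℕ):ℝ)), hqs] at this
      have hsum2 : c^(2*s) * (∑ j ∈ Finset.Ico 1 k, (j:ℝ)^t) ≤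
          ∑ i ∈ Finset.range (k-1), (B (i+1)) ^ (2*s) := by
        have hre : ∑ j ∈ Finset.Ico 1 k, (j:ℝ)^t
            = ∑ i ∈ Finset.range (k-1), ((i+1:ℕ):ℝ)^t := by
          rw [Finset.sum_Ico_eq_sum_range]
          apply Finset.sum_congr rfl
          intro i _
          congr 2
          omega
        rw [hre, Finset.mul_sum]
        exact Finset.sum_le_sum hterm
      have hsp := alg2_sumpow t htnn k hk2
      have hmul := mul_le_mul_of_nonneg_left hsp
        (Real.rpow_nonneg hcpos.le (2*s))
      linarith
    -- combine
    have hmain : c^(2*s) * ((2:ℝ)^(-(t+2)) * (k:ℝ)^(t+1)) ≤ M * (B k)^(1-s) :=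
      le_trans hLow hH
    -- use choice of c
    have hcle : c^(1-3*s) ≤ 2^(-(t+2))/M := by
      have h1' : c ≤ (2^(-(t+2))/M) ^ q := min_le_right _ _
      have := Real.rpow_le_rpow hcpos.le h1' (by linarith : (0:ℝ) ≤ 1-3*s)
      rwa [← Real.rpow_mul hNpos.le, hq3s,
        Real.rpow_one] at this
    have hstep : M * c^(1-s) * (k:ℝ)^(t+1) ≤ c^(2*s) * (2:ℝ)^(-(t+2)) * (k:ℝ)^(t+1) := by
      have h1' : M * c^(1-s) ≤ c^(2*s) * 2^(-(t+2)) := by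
        have := mul_le_mul_of_nonneg_left hcle (by positivity : (0:ℝ) ≤ M * c^(2*s))
        calc M * c^(1-s) = M * c^(2*s) * c^(1-3*s) := by
              rw [mul_assoc, ← Real.rpow_add hcpos]; congr 2; ring
          _ ≤ M * c^(2*s) * (2^(-(t+2))/M) := this
          _ = c^(2*s) * 2^(-(t+2)) := by field_simp
      exact mul_le_mul_of_nonneg_right h1' (by positivity)
    have hfin : (c * (k:ℝ)^q)^(1-s) ≤ (B k)^(1-s) := by
      have h1' : M * c^(1-s) * (k:ℝ)^(t+1) ≤ M * (B k)^(1-s) := by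
        have := le_trans hstep (by linarith [hmain] : c^(2*s) * (2:ℝ)^(-(t+2)) * (k:ℝ)^(t+1) ≤ M * (B k)^(1-s))
        exact this
      have h2' : c^(1-s) * (k:ℝ)^(t+1) ≤ (B k)^(1-s) := by
        have := (mul_le_mul_iff_right₀ hMpos).1 (by linarith [h1'] : M * (c^(1-s) * (k:ℝ)^(t+1)) ≤ M * (B k)^(1-s))
        exact this
      calc (c * (k:ℝ)^q)^(1-s) = c^(1-s) * ((k:ℝ)^q)^(1-s) := by
            rw [Real.mul_rpow hcpos.le (Real.rpow_nonneg hkpos.le q)]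
        _ = c^(1-s) * (k:ℝ)^(t+1) := by rw [← Real.rpow_mul hkpos.le, hq1s]
        _ ≤ (B k)^(1-s) := h2'
    have := (Real.rpow_le_rpow_iff (by positivity) (hBnn k) (by linarith : (0:ℝ) < 1-s)).1 hfin
    exact this

set_option maxHeartbeats 2000000 in
theorem stmt_17 (d p : ℕ) (hd : 1 ≤ d) (hp : 1 ≤ p)
    (Φ : EuclideanSpace ℝ (Fin d) → ℝ)
    (hconv : ConvexOn ℝ Set.univ Φ) (hsmooth : ContDiff ℝ 2 Φ)
    (σ θ : ℝ) (hσ : σ ∈ Set.Ioo (0:ℝ) 1) (hθ : 0 < θ)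
    (xstar : EuclideanSpace ℝ (Fin d)) (hstar : ∀ y, Φ xstar ≤ Φ y)
    (x v w vt : ℕ → EuclideanSpace ℝ (Fin d)) (γ eps lam α E : ℕ → ℝ)
    (hproj : ∀ z : EuclideanSpace ℝ (Fin d), (∀ y, Φ z ≤ Φ y) → ‖v 0 - xstar‖ ≤ ‖v 0 - z‖)
    (hγ0 : γ 0 = 1) (hγpos : ∀ k : ℕ, 0 < γ k)
    (hlampos : ∀ k : ℕ, 0 < lam (k+1)) (hepsnn : ∀ k : ℕ, 0 ≤ eps (k+1))
    (hα : ∀ k : ℕ, α (k+1) ∈ Set.Ioo (0:ℝ) 1)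
    (hαeq : ∀ k : ℕ, (α (k+1)) ^ 2 = lam (k+1) * ((1 - α (k+1)) * γ k))
    (hγ : ∀ k : ℕ, γ (k+1) = (1 - α (k+1)) * γ k)
    (hvt : ∀ k : ℕ, vt k = (1 - α (k+1)) • x k + α (k+1) • v k)
    (hw : ∀ k : ℕ, ∀ y : EuclideanSpace ℝ (Fin d),
      Φ (x (k+1)) + ⟪y - x (k+1), w (k+1)⟫ - eps (k+1) ≤ Φ y)
    (herr : ∀ k : ℕ,
      ‖lam (k+1) • w (k+1) + x (k+1) - vt k‖ ^ 2 + 2 * lam (k+1) * eps (k+1) ≤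
        σ ^ 2 * ‖x (k+1) - vt k‖ ^ 2)
    (hls : ∀ k : ℕ, θ ≤ lam (k+1) * ‖x (k+1) - vt k‖ ^ (p - 1))
    (hv : ∀ k : ℕ, v (k+1) = v k - (α (k+1) / γ (k+1)) • w (k+1))
    (hE : ∀ k : ℕ, E k = (1 / γ k) * (Φ (x k) - Φ xstar) + (1/2) * ‖v k - xstar‖ ^ 2) :
    ∃ C > (0:ℝ), ∀ k : ℕ, 1 ≤ k →
      Φ (x k) - Φ xstar ≤ C * (k:ℝ) ^ (-((3 * (p:ℝ) + 1) / 2)) ∧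
      sInf ((fun i => ‖w i‖ ^ 2) '' {i : ℕ | 1 ≤ i ∧ i ≤ k}) ≤
        C * (k:ℝ) ^ (-(3 * (p:ℝ))) ∧
      sInf (eps '' {i : ℕ | 1 ≤ i ∧ i ≤ k}) ≤ C * (k:ℝ) ^ (-((3 * (p:ℝ) + 3) / 2)) := by
  obtain ⟨hσ0, hσ1⟩ := hσ
  have hσsq : σ^2 < 1 := by nlinarith
  have hαpos : ∀ k : ℕ, 0 < α (k+1) := fun k => (hα k).1
  have hαlt : ∀ k : ℕ, α (k+1) < 1 := fun k => (hα k).2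
  set R : ℕ → ℝ := fun i => ‖x (i+1) - vt i‖ with hRdef
  have hRnn : ∀ i, 0 ≤ R i := fun i => norm_nonneg _
  -- ONE-STEP DECREASE
  have key : ∀ k : ℕ, E (k+1) + ((1-σ^2)/2) * ((1/γ (k+1))/lam (k+1)) * R k ^ 2 ≤ E k := by
    intro k
    have hlp := hlampos k
    have hgp := hγpos k
    have hgp1 := hγpos (k+1)
    have f1 : (Φ (x (k+1)) - Φ xstar) - (Φ (x k) - Φ xstar)
        ≤ ⟪x (k+1) - x k, w (k+1)⟫ + eps (k+1) := by
      have h := hw k (x k)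
      have hni : ⟪x k - x (k+1), w (k+1)⟫ = -⟪x (k+1) - x k, w (k+1)⟫ := by
        rw [show x k - x (k+1) = -(x (k+1) - x k) from by abel, inner_neg_left]
      rw [hni] at h
      linarith
    have f2 : Φ (x (k+1)) - Φ xstar ≤ ⟪x (k+1) - xstar, w (k+1)⟫ + eps (k+1) := by
      have h := hw k xstar
      have hni : ⟪xstar - x (k+1), w (k+1)⟫ = -⟪x (k+1) - xstar, w (k+1)⟫ := by
        rw [show xstar - x (k+1) = -(x (k+1) - xstar) from by abel, inner_neg_left]
      rw [hni] at h
      linarith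
    have f3 : (1 - α (k+1)) * ⟪x (k+1) - x k, w (k+1)⟫
        + α (k+1) * ⟪x (k+1) - xstar, w (k+1)⟫
        = ⟪x (k+1) - vt k, w (k+1)⟫ + α (k+1) * ⟪v k - xstar, w (k+1)⟫ := by
      rw [hvt k]
      simp only [inner_sub_left, inner_add_left, real_inner_smul_left]
      ring
    have hveq : v (k+1) - xstar = (v k - xstar) - (α (k+1)/γ (k+1)) • w (k+1) := by
      rw [hv k]; abel
    have f4 : ‖v (k+1) - xstar‖^2 = ‖v k - xstar‖^2
        - 2*(α (k+1)/γ (k+1))*⟪v k - xstar, w (k+1)⟫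
        + (α (k+1)/γ (k+1))^2*‖w (k+1)‖^2 := by
      rw [hveq, norm_sub_sq_real, real_inner_smul_right, norm_smul, Real.norm_eq_abs,
        mul_pow, sq_abs]
      ring
    have hsplit : lam (k+1) • w (k+1) + x (k+1) - vt k
        = lam (k+1) • w (k+1) + (x (k+1) - vt k) := by abel
    have f5exp : ‖lam (k+1) • w (k+1) + x (k+1) - vt k‖^2
        = (lam (k+1))^2*‖w (k+1)‖^2 + 2*lam (k+1)*⟪x (k+1) - vt k, w (k+1)⟫ + R k^2 := by
      rw [hsplit, norm_add_sq_real, real_inner_smul_left, norm_smul, Real.norm_eq_abs,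
        mul_pow, sq_abs, real_inner_comm]
      ring
    have f5 : (lam (k+1))^2*‖w (k+1)‖^2 + 2*lam (k+1)*⟪x (k+1) - vt k, w (k+1)⟫
        + R k^2 + 2*lam (k+1)*eps (k+1) ≤ σ^2*(R k)^2 := by
      have h := herr k
      rw [f5exp] at h
      linarith
    have hsc := alg2_scalar σ (α (k+1)) (γ k) (γ (k+1)) (lam (k+1)) (eps (k+1))
      (Φ (x k) - Φ xstar) (Φ (x (k+1)) - Φ xstar)
      ⟪x (k+1) - vt k, w (k+1)⟫ ⟪v k - xstar, w (k+1)⟫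
      ⟪x (k+1) - x k, w (k+1)⟫ ⟪x (k+1) - xstar, w (k+1)⟫
      ‖w (k+1)‖ (R k) (‖v k - xstar‖^2)
      hgp (hαpos k) (hαlt k) hlp (hγ k) (by rw [hαeq k, ← hγ k])
      f1 f2 f3 f5
    rw [hE (k+1), hE k]
    linarith [hsc, f4]
  -- ENERGY FACTS
  have hEnn : ∀ k : ℕ, 0 ≤ E k := by
    intro k
    rw [hE k]
    have h1 : 0 ≤ Φ (x k) - Φ xstar := sub_nonneg.2 (hstar _)
    have h2 : (0:ℝ) < 1/γ k := one_div_pos.2 (hγpos k)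
    have h3 : (0:ℝ) ≤ (1/2) * ‖v k - xstar‖^2 := by positivity
    nlinarith [mul_nonneg h2.le h1]
  set c0 : ℝ := (1-σ^2)/2 with hc0def
  have hc0 : 0 < c0 := by rw [hc0def]; linarith
  set D : ℕ → ℝ := fun i => ((1/γ (i+1))/lam (i+1)) * R i^2 with hDdef
  have hDnn : ∀ i, 0 ≤ D i := by
    intro i
    have := hγpos (i+1); have := hlampos i; have := hRnn i
    positivity
  have htel : ∀ k : ℕ, c0 * ∑ i ∈ Finset.range k, D i + E k ≤ E 0 := by
    intro k
    induction k with
    | zero => simp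
    | succ n ihn =>
      rw [Finset.sum_range_succ]
      have := key n
      have hD : D n = ((1/γ (n+1))/lam (n+1)) * R n^2 := rfl
      nlinarith
  set S : ℝ := 2*(E 0 + 1)/(1-σ^2) with hSdef
  have hSpos : 0 < S := by
    have h := hEnn 0
    rw [hSdef]
    apply div_pos <;> linarith
  have hDsum : ∀ k : ℕ, ∑ i ∈ Finset.range k, D i ≤ S := by
    intro k
    have h1 := htel k
    have h2 := hEnn k
    rw [hSdef]
    rw [le_div_iff₀ (by linarith : (0:ℝ) < 1-σ^2)]
    rw [hc0def] at h1
    nlinarith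
  have hDle : ∀ i : ℕ, D i ≤ S := by
    intro i
    have h1 : D i ≤ ∑ j ∈ Finset.range (i+1), D j :=
      Finset.single_le_sum (fun j _ => hDnn j) (Finset.self_mem_range_succ i)
    exact le_trans h1 (hDsum (i+1))
  -- gamma facts
  have hγle1 : ∀ k : ℕ, γ k ≤ 1 := by
    intro k
    induction k with
    | zero => rw [hγ0]
    | succ n ihn =>
      rw [hγ n]
      have := hγpos n
      have := hαpos n
      nlinarith
  have hAge1 : ∀ k : ℕ, 1 ≤ 1/γ k := by
    intro k
    rw [le_div_iff₀ (hγpos k), one_mul]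
    exact hγle1 k
  have hγdec : ∀ k : ℕ, γ (k+1) ≤ γ k := by
    intro k
    rw [hγ k]
    have := hγpos k; have := hαpos k
    nlinarith
  have hRS : ∀ i : ℕ, R i^2 ≤ lam (i+1) * S := by
    intro i
    have h2 := hAge1 (i+1)
    have h3 := hlampos i
    have h4 := hRnn i
    have h1 : (1/lam (i+1)) * R i^2 ≤ D i := by
      rw [hDdef]
      exact mul_le_mul_of_nonneg_right ((div_le_div_iff_of_pos_right h3).2 h2) (by positivity)
    have h5 : (1/lam (i+1)) * R i^2 ≤ S := le_trans h1 (hDle i)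
    have h6 := mul_le_mul_of_nonneg_left h5 h3.le
    calc R i^2 = lam (i+1) * ((1/lam (i+1)) * R i^2) := by field_simp
      _ ≤ lam (i+1) * S := h6
  -- SQRT RECURSION
  have hαval : ∀ k : ℕ, α (k+1) = Real.sqrt (lam (k+1) * γ (k+1)) := by
    intro k
    have h := hαeq k
    rw [← hγ k] at h
    rw [← h, Real.sqrt_sq (hαpos k).le]
  have hsqrt : ∀ k : ℕ, Real.sqrt (1/γ k) + Real.sqrt (lam (k+1))/2
      ≤ Real.sqrt (1/γ (k+1)) := by
    intro k
    have hgp := hγpos k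
    have hgp1 := hγpos (k+1)
    have hlp := hlampos k
    set u := Real.sqrt (1/γ (k+1)) with hu
    set b := Real.sqrt (1/γ k) with hb
    have hu2 : u^2 = 1/γ (k+1) := Real.sq_sqrt (by positivity)
    have hb2 : b^2 = 1/γ k := Real.sq_sqrt (by positivity)
    have hupos : 0 < u := Real.sqrt_pos.2 (by positivity)
    have hbnn : 0 ≤ b := Real.sqrt_nonneg _
    have hsnn : 0 ≤ Real.sqrt (lam (k+1)) := Real.sqrt_nonneg _
    have hub : b ≤ u := by
      rw [hu, hb]
      apply Real.sqrt_le_sqrt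
      apply one_div_le_one_div_of_le hgp1 (hγdec k)
    have hdiff : 1/γ (k+1) - 1/γ k = α (k+1)/γ (k+1) := by
      rw [hγ k]
      have hα1 : (1:ℝ) - α (k+1) ≠ 0 := by have := hαlt k; intro hcon; linarith
      field_simp
      ring
    have hαdiv : α (k+1)/γ (k+1) = Real.sqrt (lam (k+1)) * u := by
      have hsq : (α (k+1)/γ (k+1))^2 = (Real.sqrt (lam (k+1)) * u)^2 := by
        rw [div_pow, hαeq k, ← hγ k, mul_pow, Real.sq_sqrt hlp.le, hu2]
        field_simp
      have hann : 0 ≤ α (k+1)/γ (k+1) := div_nonneg (hαpos k).le hgp1.le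
      have hbnn' : 0 ≤ Real.sqrt (lam (k+1)) * u := by positivity
      calc α (k+1)/γ (k+1) = Real.sqrt ((α (k+1)/γ (k+1))^2) := (Real.sqrt_sq hann).symm
        _ = Real.sqrt ((Real.sqrt (lam (k+1)) * u)^2) := by rw [hsq]
        _ = Real.sqrt (lam (k+1)) * u := Real.sqrt_sq hbnn'
    have hrec : u^2 = b^2 + Real.sqrt (lam (k+1)) * u := by
      rw [hu2, hb2, ← hαdiv]
      linarith [hdiff]
    have h2 : (u - b) * (u + b) = Real.sqrt (lam (k+1)) * u := by linear_combination hrec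
    have hsb : Real.sqrt (lam (k+1)) * b ≤ Real.sqrt (lam (k+1)) * u :=
      mul_le_mul_of_nonneg_left hub hsnn
    have h3 : Real.sqrt (lam (k+1)) * (u+b) ≤ 2*((u-b)*(u+b)) := by
      rw [h2]; linarith
    have hup : 0 < u + b := by linarith
    have h4 : Real.sqrt (lam (k+1)) ≤ 2*(u-b) :=
      le_of_mul_le_mul_right (h3.trans_eq (by ring)) hup
    linarith
  -- B SEQUENCE
  set B : ℕ → ℝ := fun k => ∑ i ∈ Finset.range k, Real.sqrt (lam (i+1)) with hBdef
  have hBnn : ∀ k, 0 ≤ B k := fun k =>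
    Finset.sum_nonneg fun i _ => Real.sqrt_nonneg _
  have hBsqrt : ∀ k : ℕ, 1 + B k/2 ≤ Real.sqrt (1/γ k) := by
    intro k
    induction k with
    | zero =>
      rw [hγ0]
      norm_num
    | succ n ihn =>
      have h1 := hsqrt n
      have h2 : B (n+1) = B n + Real.sqrt (lam (n+1)) := Finset.sum_range_succ _ n
      rw [h2]
      linarith
  have hABk : ∀ k : ℕ, (1 + B k/2)^2 ≤ 1/γ k := by
    intro k
    have h1 := hBsqrt k
    have h2 : (0:ℝ) ≤ 1 + B k/2 := by have := hBnn k; linarith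
    have h3 := pow_le_pow_left₀ h2 h1 2
    rwa [Real.sq_sqrt (le_of_lt (one_div_pos.2 (hγpos k)))] at h3
  -- UNIFORM LOWER BOUND ON lam
  have hθ2 : ∀ i : ℕ, θ^2 ≤ lam (i+1)^(p+1) * S^(p-1) := by
    intro i
    have hlp := hlampos i
    have h0 := hls i
    have h1 : θ^2 ≤ (lam (i+1) * R i^(p-1))^2 := by
      have := pow_le_pow_left₀ hθ.le h0 2
      exact this
    have h2 : (lam (i+1) * R i^(p-1))^2 = lam (i+1)^2 * (R i^2)^(p-1) := by
      rw [mul_pow, ← pow_mul, ← pow_mul, Nat.mul_comm]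
    have h3 : (R i^2)^(p-1) ≤ (lam (i+1) * S)^(p-1) :=
      pow_le_pow_left₀ (by positivity) (hRS i) (p-1)
    have h4 : lam (i+1)^2 * (lam (i+1) * S)^(p-1) = lam (i+1)^(p+1) * S^(p-1) := by
      rw [mul_pow, ← mul_assoc, ← pow_add]
      congr 2
      omega
    calc θ^2 ≤ lam (i+1)^2 * (R i^2)^(p-1) := by rw [← h2]; exact h1
      _ ≤ lam (i+1)^2 * (lam (i+1) * S)^(p-1) :=
          mul_le_mul_of_nonneg_left h3 (by positivity)
      _ = lam (i+1)^(p+1) * S^(p-1) := h4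
  set Λ : ℝ := (θ^2/S^(p-1)) ^ (1/((p:ℝ)+1)) with hΛdef
  have hΛpos : 0 < Λ :=
    Real.rpow_pos_of_pos (div_pos (pow_pos hθ 2) (pow_pos hSpos _)) _
  have hlamlb : ∀ i : ℕ, Λ ≤ lam (i+1) := by
    intro i
    have hlp := hlampos i
    have h1 : θ^2/S^(p-1) ≤ lam (i+1)^(p+1) :=
      (div_le_iff₀ (pow_pos hSpos _)).2 (hθ2 i)
    have h2 := Real.rpow_le_rpow (le_of_lt (div_pos (pow_pos hθ 2) (pow_pos hSpos _))) h1
      (by positivity : (0:ℝ) ≤ 1/((p:ℝ)+1))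
    rw [hΛdef]
    calc (θ^2/S^(p-1)) ^ (1/((p:ℝ)+1)) ≤ (lam (i+1)^(p+1)) ^ (1/((p:ℝ)+1)) := h2
      _ = lam (i+1) := by
          rw [← Real.rpow_natCast (lam (i+1)) (p+1), ← Real.rpow_mul hlp.le]
          rw [show ((p+1:ℕ):ℝ) * (1/((p:ℝ)+1)) = 1 by push_cast; field_simp]
          exact Real.rpow_one _
  -- GROWTH OF B
  obtain ⟨c, hcpos, hc⟩ : ∃ c > 0, ∀ k : ℕ, 1 ≤ k →
      c * (k:ℝ)^((3*(p:ℝ)+1)/4) ≤ B k := by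
    rcases Nat.lt_or_ge p 2 with hp1 | hp2
    · -- p = 1
      have hpeq : p = 1 := by omega
      subst hpeq
      refine ⟨Real.sqrt Λ, Real.sqrt_pos.2 hΛpos, ?_⟩
      intro k hk
      have h1 : ∀ i ∈ Finset.range k, Real.sqrt Λ ≤ Real.sqrt (lam (i+1)) :=
        fun i _ => Real.sqrt_le_sqrt (hlamlb i)
      have h2 := Finset.card_nsmul_le_sum (Finset.range k) _ _ h1
      rw [Finset.card_range, nsmul_eq_mul] at h2
      have h3 : (3*((1:ℕ):ℝ)+1)/4 = 1 := by norm_num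
      rw [h3, Real.rpow_one]
      calc Real.sqrt Λ * (k:ℝ) = (k:ℝ) * Real.sqrt Λ := by ring
        _ ≤ B k := h2
    · -- p ≥ 2 : use bootstrap
      obtain ⟨P, hPdef⟩ : ∃ P : ℝ, P = (p:ℝ) := ⟨_, rfl⟩
      have hP2 : (2:ℝ) ≤ P := by rw [hPdef]; exact_mod_cast hp2
      have hP1 : (0:ℝ) < P - 1 := by linarith
      obtain ⟨ee, heedef⟩ : ∃ ee : ℝ, ee = 2/(P-1) := ⟨_, rfl⟩
      have heenn : 0 ≤ ee := by rw [heedef]; positivity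
      have hte : (0:ℝ) < θ^ee := Real.rpow_pos_of_pos hθ ee
      obtain ⟨β, hβdef⟩ : ∃ β : ℝ, β = (P+1)/(P-1) := ⟨_, rfl⟩
      have heβ : ee = β - 1 := by rw [heedef, hβdef]; field_simp; ring
      obtain ⟨K, hKdef⟩ : ∃ K : ℝ, K = 4*θ^(-ee)*S := ⟨_, rfl⟩
      have hKpos : 0 < K := by
        rw [hKdef]
        have := Real.rpow_pos_of_pos hθ (-ee)
        positivity
      have hcon : ∀ k : ℕ, ∑ i ∈ Finset.range k,
          (B (i+1))^2 * (lam (i+1)) ^ (-β) ≤ K := by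
        intro k
        have hpt : ∀ i : ℕ, (B (i+1))^2 * (lam (i+1)) ^ (-β) ≤ 4*θ^(-ee) * D i := by
          intro i
          have hlp := hlampos i
          have hgp1 := hγpos (i+1)
          have hBA : (B (i+1))^2 ≤ 4*(1/γ (i+1)) := by
            have h1 := hABk (i+1)
            have h2 := hBnn (i+1)
            nlinarith
          -- θ^ee ≤ lam^(β-1) * R i^2
          have hthe : θ^ee ≤ lam (i+1)^ee * R i^2 := by
            have h0 := hls i
            have ha := Real.rpow_le_rpow hθ.le h0 heenn
            rw [Real.mul_rpow hlp.le (pow_nonneg (hRnn i) _)] at ha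
            have hre : (R i^(p-1) : ℝ)^ee = R i^2 := by
              rw [← Real.rpow_natCast (R i) (p-1), ← Real.rpow_mul (hRnn i)]
              have hcast : ((p-1:ℕ):ℝ) = P - 1 := by
                rw [hPdef]
                push_cast [Nat.cast_sub (by omega : 1 ≤ p)]
                ring
              rw [hcast, heedef]
              rw [show (P-1) * (2/(P-1)) = 2 from by field_simp]
              rw [show (2:ℝ) = ((2:ℕ):ℝ) from by norm_num, Real.rpow_natCast]
            rwa [hre] at ha
          have hkey : θ^ee * lam (i+1)^(1-β) ≤ R i^2 := by
            have h1 := mul_le_mul_of_nonneg_right hthe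
              (Real.rpow_nonneg hlp.le (1-β))
            have h2 : lam (i+1)^ee * R i^2 * lam (i+1)^(1-β) = R i^2 := by
              rw [heβ]
              rw [show lam (i+1)^(β-1) * R i^2 * lam (i+1)^(1-β)
                = lam (i+1)^(β-1) * lam (i+1)^(1-β) * R i^2 from by ring]
              rw [← Real.rpow_add hlp]
              norm_num
            rw [h2] at h1
            exact h1
          have e0 : lam (i+1)^(-β) = lam (i+1)^(1-β)/lam (i+1) := by
            rw [show -β = (1-β) - 1 from by ring, Real.rpow_sub hlp, Real.rpow_one]
          have step2 : lam (i+1)^(-β) ≤ R i^2/(θ^ee * lam (i+1)) := by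
            rw [e0, show lam (i+1)^(1-β)/lam (i+1)
              = (θ^ee * lam (i+1)^(1-β))/(θ^ee * lam (i+1)) from
                (mul_div_mul_left _ _ (ne_of_gt hte)).symm]
            exact (div_le_div_iff_of_pos_right (by positivity)).2 hkey
          have hfin : (B (i+1))^2 * (lam (i+1)) ^ (-β)
              ≤ (4*(1/γ (i+1))) * (R i^2/(θ^ee * lam (i+1))) := by
            apply mul_le_mul hBA step2 (Real.rpow_nonneg hlp.le _)
            positivity
          calc (B (i+1))^2 * (lam (i+1)) ^ (-β)
              ≤ (4*(1/γ (i+1))) * (R i^2/(θ^ee * lam (i+1))) := hfin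
            _ = 4*θ^(-ee) * D i := by
                simp only [hDdef, Real.rpow_neg hθ.le, div_eq_mul_inv, mul_inv]
                ring
        calc ∑ i ∈ Finset.range k, (B (i+1))^2 * (lam (i+1)) ^ (-β)
            ≤ ∑ i ∈ Finset.range k, 4*θ^(-ee) * D i :=
              Finset.sum_le_sum fun i _ => hpt i
          _ = 4*θ^(-ee) * ∑ i ∈ Finset.range k, D i := by rw [← Finset.mul_sum]
          _ ≤ K := by
              rw [hKdef]
              have h9 : (0:ℝ) < θ^(-ee) := Real.rpow_pos_of_pos hθ (-ee)
              exact mul_le_mul_of_nonneg_left (hDsum k) (by positivity)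
      have hβmatch : β = ((p:ℝ)+1)/((p:ℝ)-1) := by rw [hβdef, hPdef]
      apply alg2_bootstrap p hp2 lam B K Λ hKpos hΛpos hlampos hlamlb (fun k => rfl)
      intro k
      rw [← hβmatch]
      exact hcon k
  obtain ⟨q, hqdef⟩ : ∃ q : ℝ, q = (3*(p:ℝ)+1)/4 := ⟨_, rfl⟩
  rw [← hqdef] at hc
  have hq1 : 1 ≤ q := by
    rw [hqdef]
    have : (1:ℝ) ≤ (p:ℝ) := by exact_mod_cast hp
    linarith
  -- general lower bound on 1/γ m
  have hAm : ∀ m : ℕ, 1 ≤ m → c^2*((m:ℝ))^(2*q)/4 ≤ 1/γ m := by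
    intro m hm
    have hmpos : (0:ℝ) < (m:ℝ) := by exact_mod_cast Nat.pos_of_ne_zero (by omega)
    have h2q : ((m:ℝ)^q)^2 = (m:ℝ)^(2*q) := by
      rw [← Real.rpow_natCast ((m:ℝ)^q) 2, ← Real.rpow_mul hmpos.le]
      congr 1
      push_cast
      ring
    have hBm := hc m hm
    have h1 := hABk m
    have h2 := hBnn m
    have h3 : (c*(m:ℝ)^q)^2 ≤ (B m)^2 := by
      apply pow_le_pow_left₀ (by positivity) hBm
    rw [mul_pow, h2q] at h3
    nlinarith
  -- E k ≤ E 0 and function value bound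
  have hEk0 : ∀ k : ℕ, E k ≤ E 0 := by
    intro k
    have h1 := htel k
    have h2 : 0 ≤ ∑ i ∈ Finset.range k, D i := Finset.sum_nonneg fun i _ => hDnn i
    nlinarith
  have hPhile : ∀ k : ℕ, (1/γ k) * (Φ (x k) - Φ xstar) ≤ E 0 + 1 := by
    intro k
    have h1 := hEk0 k
    rw [hE k] at h1
    have h2 : (0:ℝ) ≤ (1/2) * ‖v k - xstar‖^2 := by positivity
    have h3 := hEnn 0
    linarith
  -- constants
  obtain ⟨C1, hC1def⟩ : ∃ C1 : ℝ, C1 = 4*(E 0 + 1)/c^2 := ⟨_, rfl⟩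
  obtain ⟨C2, hC2def⟩ : ∃ C2 : ℝ, C2 = 64*S/c^4 := ⟨_, rfl⟩
  obtain ⟨C3, hC3def⟩ : ∃ C3 : ℝ, C3 = S/((c^2/2)*(2:ℝ)^(-(2*q+2))) := ⟨_, rfl⟩
  have hE01 : (0:ℝ) < E 0 + 1 := by have := hEnn 0; linarith
  have h2qpow : (0:ℝ) < (2:ℝ)^(-(2*q+2)) := Real.rpow_pos_of_pos (by norm_num) _
  have hC1pos : 0 < C1 := by rw [hC1def]; positivity
  have hC2pos : 0 < C2 := by rw [hC2def]; positivity
  have hC3pos : 0 < C3 := by rw [hC3def]; positivity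
  refine ⟨C1 + C2 + C3, by linarith, ?_⟩
  intro k hk
  have hkpos : (0:ℝ) < (k:ℝ) := by exact_mod_cast Nat.pos_of_ne_zero (by omega)
  have hkR1 : (1:ℝ) ≤ (k:ℝ) := by exact_mod_cast hk
  -- ===== BOUND 1 =====
  have hb1 : Φ (x k) - Φ xstar ≤ C1 * (k:ℝ) ^ (-((3 * (p:ℝ) + 1) / 2)) := by
    have h1 := hPhile k
    have h2 := hAm k hk
    have hgp := hγpos k
    have hApos : (0:ℝ) < c^2*((k:ℝ))^(2*q)/4 := by positivity
    have h3 : Φ (x k) - Φ xstar ≤ γ k * (E 0 + 1) := by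
      have h4 := mul_le_mul_of_nonneg_left h1 hgp.le
      calc Φ (x k) - Φ xstar = γ k * ((1/γ k) * (Φ (x k) - Φ xstar)) := by
            field_simp
        _ ≤ γ k * (E 0 + 1) := h4
    have h5 : γ k ≤ 4/(c^2*((k:ℝ))^(2*q)) := by
      have h6 : γ k = 1/(1/γ k) := by field_simp
      rw [h6]
      calc 1/(1/γ k) ≤ 1/(c^2*((k:ℝ))^(2*q)/4) :=
            one_div_le_one_div_of_le hApos h2
        _ = 4/(c^2*((k:ℝ))^(2*q)) := by rw [one_div_div]
    have hexp1 : (k:ℝ) ^ (-((3 * (p:ℝ) + 1) / 2)) = ((k:ℝ)^(2*q))⁻¹ := by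
      rw [show -((3 * (p:ℝ) + 1) / 2) = -(2*q) from by rw [hqdef]; ring,
        Real.rpow_neg hkpos.le]
    have h7 : γ k * (E 0 + 1) ≤ 4/(c^2*((k:ℝ))^(2*q)) * (E 0 + 1) :=
      mul_le_mul_of_nonneg_right h5 hE01.le
    have h8 : 4/(c^2*((k:ℝ))^(2*q)) * (E 0 + 1) = C1 * ((k:ℝ)^(2*q))⁻¹ := by
      rw [hC1def]
      have : ((k:ℝ))^(2*q) ≠ 0 := by positivity
      field_simp
    rw [hexp1]
    linarith
  -- ===== BOUND 2 =====
  have hb2 : sInf ((fun i => ‖w i‖ ^ 2) '' {i : ℕ | 1 ≤ i ∧ i ≤ k}) ≤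
      C2 * (k:ℝ) ^ (-(3 * (p:ℝ))) := by
    have hGsum : ∑ i ∈ Finset.range k, (1/γ (i+1) - 1/γ i) = 1/γ k - 1/γ 0 :=
      Finset.sum_range_sub (fun i => 1/γ i) k
    rw [hγ0, one_div_one] at hGsum
    have hdiffγ : ∀ i : ℕ, 1/γ (i+1) - 1/γ i = α (i+1)/γ (i+1) := by
      intro i
      rw [hγ i]
      have hα1 : (1:ℝ) - α (i+1) ≠ 0 := by have := hαlt i; intro hcon; linarith
      have := hγpos i
      field_simp
      ring
    have hGsq : ∀ i : ℕ, (1/γ (i+1) - 1/γ i)^2 = lam (i+1) * (1/γ (i+1)) := by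
      intro i
      rw [hdiffγ i, div_pow, hαeq i, ← hγ i]
      have := hγpos (i+1)
      field_simp
    obtain ⟨W, hWdef⟩ : ∃ W : ℝ, W = ∑ i ∈ Finset.range k, lam (i+1)*(1/γ (i+1)) :=
      ⟨_, rfl⟩
    have hCS2 : (1/γ k - 1)^2 ≤ (k:ℝ) * W := by
      have hCS := sq_sum_le_card_mul_sum_sq (s := Finset.range k)
        (f := fun i => 1/γ (i+1) - 1/γ i)
      rw [hGsum, Finset.card_range] at hCS
      calc (1/γ k - 1)^2 ≤ (k:ℝ) * ∑ i ∈ Finset.range k, (1/γ (i+1) - 1/γ i)^2 := hCS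
        _ = (k:ℝ) * W := by
            rw [hWdef]
            congr 1
            exact Finset.sum_congr rfl fun i _ => hGsq i
    -- lower bound on 1/γ k - 1
    have h2q : (((k:ℝ))^q)^2 = (k:ℝ)^(2*q) := by
      rw [← Real.rpow_natCast (((k:ℝ))^q) 2, ← Real.rpow_mul hkpos.le]
      congr 1
      push_cast
      ring
    have h4q : (((k:ℝ))^(2*q))^2 = (k:ℝ)^(4*q) := by
      rw [← Real.rpow_natCast (((k:ℝ))^(2*q)) 2, ← Real.rpow_mul hkpos.le]
      congr 1
      push_cast
      ring
    have hlow : c^2*(k:ℝ)^(2*q)/4 ≤ 1/γ k - 1 := by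
      have h1 := hABk k
      have h2 := hBnn k
      have h3 : (c*(k:ℝ)^q)^2 ≤ (B k)^2 := pow_le_pow_left₀ (by positivity) (hc k hk) 2
      rw [mul_pow, h2q] at h3
      nlinarith only [h1, h2, h3]
    have hW0pos : (0:ℝ) < c^4*(k:ℝ)^(4*q)/(16*(k:ℝ)) := by positivity
    have hWlb : c^4*(k:ℝ)^(4*q)/(16*(k:ℝ)) ≤ W := by
      have h1 : (c^2*(k:ℝ)^(2*q)/4)^2 ≤ (1/γ k - 1)^2 :=
        pow_le_pow_left₀ (by positivity) hlow 2
      have h2 : (c^2*(k:ℝ)^(2*q)/4)^2 = c^4*(k:ℝ)^(4*q)/16 := by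
        rw [div_pow, mul_pow, h4q]
        ring
      rw [h2] at h1
      have h3 : c^4*(k:ℝ)^(4*q)/16 ≤ (k:ℝ) * W := le_trans h1 hCS2
      rw [div_le_iff₀ (by positivity : (0:ℝ) < 16*(k:ℝ))]
      rw [div_le_iff₀ (by norm_num : (0:ℝ) < 16)] at h3
      linarith only [h3]
    have hWpos : 0 < W := lt_of_lt_of_le hW0pos hWlb
    -- find a good index
    have hDeq : ∀ i ∈ Finset.range k,
        D i = (lam (i+1)*(1/γ (i+1)))*(R i^2/lam (i+1)^2) := by
      intro i _
      have h1 := hlampos i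
      have h2 := hγpos (i+1)
      simp only [hDdef]
      field_simp
    have hsumf : ∑ i ∈ Finset.range k, (lam (i+1)*(1/γ (i+1)))*(R i^2/lam (i+1)^2)
        ≤ ∑ i ∈ Finset.range k, (S/W)*(lam (i+1)*(1/γ (i+1))) := by
      have hl : ∑ i ∈ Finset.range k, (lam (i+1)*(1/γ (i+1)))*(R i^2/lam (i+1)^2)
          = ∑ i ∈ Finset.range k, D i := (Finset.sum_congr rfl hDeq).symm
      have hr : ∑ i ∈ Finset.range k, (S/W)*(lam (i+1)*(1/γ (i+1))) = S := by
        rw [← Finset.mul_sum, ← hWdef, div_mul_cancel₀ _ (ne_of_gt hWpos)]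
      rw [hl, hr]
      exact hDsum k
    obtain ⟨i, hi, hfg⟩ := Finset.exists_le_of_sum_le
      ⟨0, Finset.mem_range.2 (by omega)⟩ hsumf
    have hlp := hlampos i
    have hlAi : 0 < lam (i+1)*(1/γ (i+1)) :=
      mul_pos hlp (one_div_pos.2 (hγpos (i+1)))
    have hv2 : R i^2/lam (i+1)^2 ≤ S/W := by
      rw [mul_comm (S/W) _] at hfg
      exact le_of_mul_le_mul_left hfg hlAi
    -- norm of w bound
    have hnle : ‖lam (i+1) • w (i+1) + x (i+1) - vt i‖ ≤ σ * R i := by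
      have h1 : ‖lam (i+1) • w (i+1) + x (i+1) - vt i‖^2 ≤ (σ*R i)^2 := by
        have hRi : ‖x (i+1) - vt i‖ = R i := rfl
        have h2 := herr i
        rw [hRi] at h2
        nlinarith only [h2, mul_nonneg hlp.le (hepsnn i)]
      have h4 := Real.sqrt_le_sqrt h1
      rwa [Real.sqrt_sq (norm_nonneg _), Real.sqrt_sq (mul_nonneg hσ0.le (hRnn i))] at h4
    have hwn : lam (i+1) * ‖w (i+1)‖ ≤ 2 * R i := by
      have h6 := norm_sub_le (lam (i+1) • w (i+1) + x (i+1) - vt i) (x (i+1) - vt i)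
      have h7 : (lam (i+1) • w (i+1) + x (i+1) - vt i) - (x (i+1) - vt i)
          = lam (i+1) • w (i+1) := by abel
      rw [h7, norm_smul, Real.norm_eq_abs, abs_of_pos hlp] at h6
      have hRi : ‖x (i+1) - vt i‖ = R i := rfl
      rw [hRi] at h6
      nlinarith only [h6, hnle, mul_nonneg (hRnn i) (sub_nonneg.2 hσ1.le)]
    have hwb : ‖w (i+1)‖^2 ≤ 4*(R i^2/lam (i+1)^2) := by
      have h9 : ‖w (i+1)‖ ≤ 2*R i/lam (i+1) := by
        rw [le_div_iff₀ hlp]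
        linarith only [hwn]
      have h10 := pow_le_pow_left₀ (norm_nonneg _) h9 2
      calc ‖w (i+1)‖^2 ≤ (2*R i/lam (i+1))^2 := h10
        _ = 4*(R i^2/lam (i+1)^2) := by rw [div_pow, mul_pow]; ring
    have hfinal : ‖w (i+1)‖^2 ≤ C2 * (k:ℝ)^(-(3*(p:ℝ))) := by
      have hSW : S/W ≤ S/(c^4*(k:ℝ)^(4*q)/(16*(k:ℝ))) :=
        div_le_div_of_nonneg_left hSpos.le hW0pos hWlb
      have heq : 4*(S/(c^4*(k:ℝ)^(4*q)/(16*(k:ℝ)))) = C2 * (k:ℝ)^(-(3*(p:ℝ))) := by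
        rw [hC2def, show -(3*(p:ℝ)) = 1 - 4*q from by rw [hqdef]; ring,
          Real.rpow_sub hkpos, Real.rpow_one]
        have h11 : (k:ℝ)^(4*q) ≠ 0 := by positivity
        field_simp
        ring
      calc ‖w (i+1)‖^2 ≤ 4*(R i^2/lam (i+1)^2) := hwb
        _ ≤ 4*(S/W) := by linarith only [hv2]
        _ ≤ 4*(S/(c^4*(k:ℝ)^(4*q)/(16*(k:ℝ)))) := by linarith only [hSW]
        _ = C2 * (k:ℝ)^(-(3*(p:ℝ))) := heq
    apply csInf_le_of_le ?_ ?_ hfinal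
    · refine ⟨0, fun y hy => ?_⟩
      obtain ⟨j, hj, rfl⟩ := hy
      positivity
    · exact ⟨i+1, ⟨by omega, by have := Finset.mem_range.1 hi; omega⟩, rfl⟩
  -- ===== BOUND 3 =====
  have hb3 : sInf (eps '' {i : ℕ | 1 ≤ i ∧ i ≤ k}) ≤
      C3 * (k:ℝ) ^ (-((3 * (p:ℝ) + 3) / 2)) := by
    obtain ⟨WA, hWAdef⟩ : ∃ WA : ℝ, WA = ∑ i ∈ Finset.range k, 1/γ (i+1) := ⟨_, rfl⟩
    have h2q1 : (0:ℝ) ≤ 2*q+1 := by linarith only [hq1]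
    have hsum_pow : (2:ℝ)^(-(2*q+2)) * (((k:ℕ)+1:ℝ))^(2*q+1)
        ≤ ∑ i ∈ Finset.range k, (((i+1:ℕ)):ℝ)^(2*q) := by
      have hsp := alg2_sumpow (2*q) (by linarith only [hq1]) (k+1) (by omega)
      have hre : ∑ j ∈ Finset.Ico 1 (k+1), (j:ℝ)^(2*q)
          = ∑ i ∈ Finset.range k, (((i+1:ℕ)):ℝ)^(2*q) := by
        rw [Finset.sum_Ico_eq_sum_range]
        apply Finset.sum_congr rfl
        intro i _
        congr 2
        omega
      rw [hre] at hsp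
      calc (2:ℝ)^(-(2*q+2)) * (((k:ℕ)+1:ℝ))^(2*q+1)
          = (2:ℝ)^(-(2*q+2)) * (((k+1:ℕ)):ℝ)^(2*q+1) := by push_cast; ring_nf
        _ ≤ _ := hsp
    have hkk1 : (k:ℝ)^(2*q+1) ≤ ((k:ℕ)+1:ℝ)^(2*q+1) :=
      Real.rpow_le_rpow hkpos.le (by linarith) h2q1
    obtain ⟨W3, hW3def⟩ : ∃ W3 : ℝ, W3 = (c^2/4)*((2:ℝ)^(-(2*q+2)) * (k:ℝ)^(2*q+1)) :=
      ⟨_, rfl⟩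
    have hW3pos : 0 < W3 := by
      rw [hW3def]
      exact mul_pos (by positivity) (mul_pos h2qpow (Real.rpow_pos_of_pos hkpos _))
    have hWAlb : W3 ≤ WA := by
      have h1 : ∑ i ∈ Finset.range k, (c^2*(((i+1:ℕ)):ℝ)^(2*q)/4) ≤ WA := by
        rw [hWAdef]
        exact Finset.sum_le_sum fun i _ => hAm (i+1) (by omega)
      have h2 : ∑ i ∈ Finset.range k, (c^2*(((i+1:ℕ)):ℝ)^(2*q)/4)
          = (c^2/4) * ∑ i ∈ Finset.range k, (((i+1:ℕ)):ℝ)^(2*q) := by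
        rw [Finset.mul_sum]
        exact Finset.sum_congr rfl fun i _ => by ring
      rw [h2] at h1
      have h3 : W3 ≤ (c^2/4) * ∑ i ∈ Finset.range k, (((i+1:ℕ)):ℝ)^(2*q) := by
        rw [hW3def]
        have h4 : (2:ℝ)^(-(2*q+2)) * (k:ℝ)^(2*q+1)
            ≤ ∑ i ∈ Finset.range k, (((i+1:ℕ)):ℝ)^(2*q) := by
          calc (2:ℝ)^(-(2*q+2)) * (k:ℝ)^(2*q+1)
              ≤ (2:ℝ)^(-(2*q+2)) * (((k:ℕ)+1:ℝ))^(2*q+1) :=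
                mul_le_mul_of_nonneg_left hkk1 h2qpow.le
            _ ≤ _ := hsum_pow
        exact mul_le_mul_of_nonneg_left h4 (by positivity)
      linarith only [h1, h3]
    have hWApos : 0 < WA := lt_of_lt_of_le hW3pos hWAlb
    -- per-index epsilon bound
    have hAe : ∀ i ∈ Finset.range k, (1/γ (i+1))*eps (i+1) ≤ D i/2 := by
      intro i _
      have hlp := hlampos i
      have hA1' : (0:ℝ) < 1/γ (i+1) := one_div_pos.2 (hγpos (i+1))
      have hRi : ‖x (i+1) - vt i‖ = R i := rfl
      have h2 := herr i
      rw [hRi] at h2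
      have h1 : 2*lam (i+1)*eps (i+1) ≤ R i^2 := by
        nlinarith only [h2, sq_nonneg ‖lam (i+1) • w (i+1) + x (i+1) - vt i‖,
          mul_nonneg (sub_nonneg.2 hσsq.le) (sq_nonneg (R i))]
      have heps_i : eps (i+1) ≤ R i^2/(2*lam (i+1)) := by
        rw [le_div_iff₀ (by positivity)]
        linarith only [h1]
      have h5 := mul_le_mul_of_nonneg_left heps_i hA1'.le
      have h6 : (1/γ (i+1))*(R i^2/(2*lam (i+1))) = D i/2 := by
        simp only [hDdef, div_eq_mul_inv, mul_inv]
        ring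
      rw [h6] at h5
      exact h5
    have hAES : ∑ i ∈ Finset.range k, (1/γ (i+1))*eps (i+1) ≤ S/2 := by
      calc ∑ i ∈ Finset.range k, (1/γ (i+1))*eps (i+1)
          ≤ ∑ i ∈ Finset.range k, D i/2 := Finset.sum_le_sum hAe
        _ = (∑ i ∈ Finset.range k, D i)/2 := by rw [Finset.sum_div]
        _ ≤ S/2 := by linarith only [hDsum k]
    have hsumg : ∑ i ∈ Finset.range k, (S/(2*WA))*(1/γ (i+1)) = S/2 := by
      rw [← Finset.mul_sum, ← hWAdef]
      field_simp
    obtain ⟨i, hi, hfg⟩ := Finset.exists_le_of_sum_le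
      ⟨0, Finset.mem_range.2 (by omega)⟩ (by rw [hsumg]; exact hAES :
        ∑ i ∈ Finset.range k, (1/γ (i+1))*eps (i+1)
          ≤ ∑ i ∈ Finset.range k, (S/(2*WA))*(1/γ (i+1)))
    have hA1' : (0:ℝ) < 1/γ (i+1) := one_div_pos.2 (hγpos (i+1))
    have hev : eps (i+1) ≤ S/(2*WA) := by
      rw [mul_comm (S/(2*WA)) _] at hfg
      exact le_of_mul_le_mul_left hfg hA1'
    have hfinal : eps (i+1) ≤ C3 * (k:ℝ)^(-((3*(p:ℝ)+3)/2)) := by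
      have hSW : S/(2*WA) ≤ S/(2*W3) :=
        div_le_div_of_nonneg_left hSpos.le (by linarith only [hW3pos])
          (by linarith only [hWAlb])
      have heq3 : S/(2*W3) = C3 * (k:ℝ)^(-((3*(p:ℝ)+3)/2)) := by
        rw [hW3def, hC3def,
          show -((3*(p:ℝ)+3)/2) = -(2*q+1) from by rw [hqdef]; ring,
          Real.rpow_neg hkpos.le]
        have h11 : (k:ℝ)^(2*q+1) ≠ 0 := ne_of_gt (Real.rpow_pos_of_pos hkpos _)
        have h12 : (2:ℝ)^(-(2*q+2)) ≠ 0 := ne_of_gt h2qpow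
        have h13 : c ≠ 0 := ne_of_gt hcpos
        field_simp
        ring
      calc eps (i+1) ≤ S/(2*WA) := hev
        _ ≤ S/(2*W3) := hSW
        _ = C3 * (k:ℝ)^(-((3*(p:ℝ)+3)/2)) := heq3
    apply csInf_le_of_le ?_ ?_ hfinal
    · refine ⟨0, fun y hy => ?_⟩
      obtain ⟨j, hj, rfl⟩ := hy
      have hj1 : j - 1 + 1 = j := by have := hj.1; omega
      rw [← hj1]
      exact hepsnn _
    · exact ⟨i+1, ⟨by omega, by have := Finset.mem_range.1 hi; omega⟩, rfl⟩
  have hr1 : (0:ℝ) < (k:ℝ) ^ (-((3 * (p:ℝ) + 1) / 2)) := Real.rpow_pos_of_pos hkpos _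
  have hr2 : (0:ℝ) < (k:ℝ) ^ (-(3 * (p:ℝ))) := Real.rpow_pos_of_pos hkpos _
  have hr3 : (0:ℝ) < (k:ℝ) ^ (-((3 * (p:ℝ) + 3) / 2)) := Real.rpow_pos_of_pos hkpos _
  refine ⟨?_, ?_, ?_⟩
  · nlinarith [hb1, mul_pos hC2pos hr1, mul_pos hC3pos hr1]
  · nlinarith [hb2, mul_pos hC1pos hr2, mul_pos hC3pos hr2]
  · nlinarith [hb3, mul_pos hC1pos hr3, mul_pos hC2pos hr3]
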